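/- arXiv:1104.5595 — 2 statements merged into one kernel-verified Lean document; each statement's English description precedes it below -/
import Mathlib

section
/- The target group obtained by factoring the progenitor 2^{⋆C(6,3)} : S₆ (with S₆ acting on the 3-element subsets of {1,…,6}) by the single relator (t_{123}·(3 4))³ is isomorphic to the Coxeter group of type E₆. -/
open Monoid Pointwise

/-- The type of `k`-element subsets of `Fin n`. -/
abbrev KSub (n k : ℕ) := {s : Finset (Fin n) // s.card = k}

/-- The free product of copies of `ℤ/2ℤ` indexed by the `k`-element subsets of `Fin n`. -/
abbrev FP (n k : ℕ) := Monoid.CoprodI (fun _ : KSub n k => Multiplicative (ZMod 2))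

/-- The symmetric generator `t_S`. -/
def tFP {n k : ℕ} (S : KSub n k) : FP n k :=
  Monoid.CoprodI.of (i := S) (Multiplicative.ofAdd (1 : ZMod 2))

/-- The action of a permutation of `Fin n` on the `k`-element subsets. -/
instance KSub.instMulAction (n k : ℕ) : MulAction (Equiv.Perm (Fin n)) (KSub n k) where
  smul σ S := ⟨σ • S.1, by rw [Finset.card_smul_finset]; exact S.2⟩
  one_smul S := Subtype.ext (one_smul _ S.1)
  mul_smul σ τ S := Subtype.ext (mul_smul σ τ S.1)

/-- The endomorphism of the free product induced by a permutation of `Fin n`. -/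
def fpHom {n k : ℕ} (σ : Equiv.Perm (Fin n)) : FP n k →* FP n k :=
  Monoid.CoprodI.lift (fun S => Monoid.CoprodI.of (M := fun _ : KSub n k => Multiplicative (ZMod 2)) (i := σ • S))

lemma fpHom_comp {n k : ℕ} (σ τ : Equiv.Perm (Fin n)) :
    (fpHom (n := n) (k := k) σ).comp (fpHom τ) = fpHom (σ * τ) := by
  apply Monoid.CoprodI.ext_hom
  intro S
  ext x
  simp [fpHom, Monoid.CoprodI.lift_of, mul_smul]

lemma fpHom_one {n k : ℕ} : fpHom (n := n) (k := k) 1 = MonoidHom.id _ := by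
  apply Monoid.CoprodI.ext_hom
  intro S
  ext x
  simp [fpHom, Monoid.CoprodI.lift_of]

/-- The action of `Sym(Fin n)` on the free product, permuting the free factors. -/
def fpAut (n k : ℕ) : Equiv.Perm (Fin n) →* MulAut (FP n k) :=
  MonoidHom.mk' (fun σ =>
    { toFun := fpHom σ
      invFun := fpHom σ⁻¹
      left_inv := fun x => by
        have h := fpHom_comp (n := n) (k := k) σ⁻¹ σ
        rw [inv_mul_cancel, fpHom_one] at h
        exact DFunLike.congr_fun h x
      right_inv := fun x => by
        have h := fpHom_comp (n := n) (k := k) σ σ⁻¹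
        rw [mul_inv_cancel, fpHom_one] at h
        exact DFunLike.congr_fun h x
      map_mul' := map_mul _ })
    (fun σ τ => by
      ext x
      exact (DFunLike.congr_fun (fpHom_comp (n := n) (k := k) σ τ) x).symm)

/-- The progenitor `2^{⋆C(n,k)} : Sₙ`. -/
abbrev Progenitor (n k : ℕ) := FP n k ⋊[fpAut n k] Equiv.Perm (Fin n)

/-- The target group: the quotient of the progenitor by the normal closure of the
single relator `(t_{S₀}·σ₀)³`. -/
abbrev TargetGroup (n k : ℕ) (S₀ : KSub n k) (σ₀ : Equiv.Perm (Fin n)) :=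
  Progenitor n k ⧸ Subgroup.normalClosure
    {(SemidirectProduct.inl (tFP S₀) * SemidirectProduct.inr σ₀) ^ 3}

/-- The image in the target group of the symmetric generator `t_S`. -/
def tbar {n k : ℕ} (S₀ : KSub n k) (σ₀ : Equiv.Perm (Fin n)) (S : KSub n k) :
    TargetGroup n k S₀ σ₀ :=
  QuotientGroup.mk (SemidirectProduct.inl (tFP S))

/-- The canonical map from the control group `Sₙ` to the target group. -/
def pbar {n k : ℕ} (S₀ : KSub n k) (σ₀ : Equiv.Perm (Fin n)) :
    Equiv.Perm (Fin n) →* TargetGroup n k S₀ σ₀ :=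
  (QuotientGroup.mk' _).comp (SemidirectProduct.inr)


namespace SymPres

variable {G : Type*} [Group G]

/-- The descending word `x (k-1) * x (k-2) * ... * x i`. -/
def T (x : ℕ → G) (i k : ℕ) : G := (((List.range' i (k - i)).map x).reverse).prod

lemma T_self (x : ℕ → G) (k : ℕ) : T x k k = 1 := by simp [T]

lemma T_split (x : ℕ → G) {i j k : ℕ} (h1 : i ≤ j) (h2 : j ≤ k) :
    T x i k = T x j k * T x i j := by
  have h : List.range' i (j - i) ++ List.range' j (k - j) = List.range' i (k - i) := by
    have := List.range'_append_1 (s := i) (m := j - i) (n := k - j)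
    rw [show i + (j-i) = j by omega, show j - i + (k - j) = k - i by omega] at this
    exact this
  rw [T, T, T, ← h]
  simp

lemma T_single (x : ℕ → G) (i : ℕ) : T x i (i+1) = x i := by
  simp [T, show i + 1 - i = 1 by omega, List.range'_one]

lemma commute_T {x : ℕ → G} {c : G} {i k : ℕ} (h : ∀ l, i ≤ l → l < k → Commute c (x l)) :
    Commute c (T x i k) := by
  apply Commute.list_prod_right
  intro y hy
  simp only [List.mem_reverse, List.mem_map, List.mem_range'_1] at hy
  obtain ⟨l, ⟨hl1, hl2⟩, rfl⟩ := hy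
  exact h l hl1 (by omega)

section Relations

variable {x : ℕ → G} {m : ℕ}

lemma T_mul_x_pred {i k : ℕ} (h1 : 1 ≤ i) (h2 : i ≤ k) :
    T x i k * x (i-1) = T x (i-1) k := by
  have hs : T x (i-1) i = x (i-1) := by
    have := T_single x (i-1); rwa [show i - 1 + 1 = i by omega] at this
  rw [T_split x (show i - 1 ≤ i by omega) h2, hs]

variable (hsq : ∀ j, x j * x j = 1)
  (hbr : ∀ j, j + 2 ≤ m → x j * x (j+1) * x j = x (j+1) * x j * x (j+1))
  (hcm : ∀ i j, i + 2 ≤ j → x i * x j = x j * x i)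

include hsq in
lemma T_mul_x_self {i k : ℕ} (h : i < k) : T x i k * x i = T x (i+1) k := by
  rw [T_split x (Nat.le_succ i) h, T_single, mul_assoc, hsq, mul_one]

include hcm in
lemma commute_x_T {j i k : ℕ} (h : j + 2 ≤ i) : Commute (x j) (T x i k) :=
  commute_T (fun l hl1 _ => hcm j l (by omega))

include hcm in
lemma T_mul_x_low {i j k : ℕ} (h : j + 2 ≤ i) : T x i k * x j = x j * T x i k :=
  ((commute_x_T hcm h).symm).eq

include hbr hcm in
lemma T_mul_x_succ {i k : ℕ} (h : i + 2 ≤ k) (hk : k ≤ m) :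
    T x i k * x (i+1) = x i * T x i k := by
  have e1 : T x (i+1) (i+2) = x (i+1) := by
    have := T_single x (i+1); rwa [show i + 1 + 1 = i + 2 by omega] at this
  have hd : T x i (i+2) = x (i+1) * x i := by
    rw [T_split x (show i ≤ i + 1 by omega) (show i + 1 ≤ i + 2 by omega), e1, T_single]
  have hsplit : T x i k = T x (i+2) k * (x (i+1) * x i) := by
    rw [T_split x (show i ≤ i + 2 by omega) h, hd]
  have hb : x (i+1) * x i * x (i+1) = x i * x (i+1) * x i := (hbr i (by omega)).symm
  have c := (commute_x_T hcm (show i + 2 ≤ i + 2 from le_refl _) (k := k)).eq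
  rw [hsplit]
  calc T x (i+2) k * (x (i+1) * x i) * x (i+1)
      = T x (i+2) k * (x (i+1) * x i * x (i+1)) := by group
    _ = (T x (i+2) k * x i) * (x (i+1) * x i) := by rw [hb]; group
    _ = (x i * T x (i+2) k) * (x (i+1) * x i) := by rw [← c]
    _ = x i * (T x (i+2) k * (x (i+1) * x i)) := by group

include hsq hbr hcm in
lemma T_mul_x_high {i j k : ℕ} (h : i + 2 ≤ j) (hj : j + 1 ≤ k) (hk : k ≤ m) :
    T x i k * x j = x (j-1) * T x i k := by
  have e1 : T x (j-1) (j+1) = x j * x (j-1) := by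
    have hs : T x (j-1) j = x (j-1) := by
      have := T_single x (j-1); rwa [show j - 1 + 1 = j by omega] at this
    rw [T_split x (show j - 1 ≤ j by omega) (show j ≤ j + 1 by omega), T_single, hs]
  have hsplit : T x i k = T x (j+1) k * (x j * x (j-1)) * T x i (j-1) := by
    rw [T_split x (show i ≤ j - 1 by omega) (show j - 1 ≤ k by omega),
      T_split x (show j - 1 ≤ j + 1 by omega) hj, e1, mul_assoc]
  have c1 : T x i (j-1) * x j = x j * T x i (j-1) :=
    ((commute_T (fun l hl1 hl2 =>
      (show Commute (x j) (x l) from (hcm l j (by omega)).symm))).eq).symm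
  have c2 : T x (j+1) k * x (j-1) = x (j-1) * T x (j+1) k :=
    (commute_x_T hcm (show j - 1 + 2 ≤ j + 1 by omega)).symm.eq
  have hb : x j * x (j-1) * x j = x (j-1) * x j * x (j-1) := by
    have := hbr (j-1) (by omega)
    rw [show j - 1 + 1 = j by omega] at this
    exact this.symm
  rw [hsplit]
  calc T x (j+1) k * (x j * x (j-1)) * T x i (j-1) * x j
      = T x (j+1) k * (x j * x (j-1)) * (T x i (j-1) * x j) := by group
    _ = T x (j+1) k * (x j * x (j-1) * x j) * T x i (j-1) := by rw [c1]; group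
    _ = T x (j+1) k * x (j-1) * (x j * x (j-1)) * T x i (j-1) := by rw [hb]; group
    _ = x (j-1) * T x (j+1) k * (x j * x (j-1)) * T x i (j-1) := by rw [c2]
    _ = x (j-1) * (T x (j+1) k * (x j * x (j-1)) * T x i (j-1)) := by group

include hsq hbr hcm in
/-- Right multiplication of a transversal element by a generator. -/
lemma T_step {i j k : ℕ} (hi : i ≤ k) (hj : j < k) (hk : k ≤ m) :
    ∃ i' ≤ k, ∃ c : G, (c = 1 ∨ ∃ l, l + 2 ≤ k ∧ c = x l) ∧ T x i k * x j = c * T x i' k := by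
  rcases lt_trichotomy j i with hlt | heq | hgt
  case inr.inl =>
    subst heq
    exact ⟨j + 1, by omega, 1, Or.inl rfl, by rw [T_mul_x_self hsq hj, one_mul]⟩
  · rcases Nat.lt_or_ge (j + 1) i with h1 | h2
    · exact ⟨i, hi, x j, Or.inr ⟨j, by omega, rfl⟩, T_mul_x_low hcm (by omega)⟩
    · have : j = i - 1 := by omega
      subst this
      exact ⟨i - 1, by omega, 1, Or.inl rfl, by rw [T_mul_x_pred (by omega) hi, one_mul]⟩
  · rcases Nat.lt_or_ge (i + 1) j with h1 | h2
    · exact ⟨i, hi, x (j-1), Or.inr ⟨j - 1, by omega, rfl⟩,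
        T_mul_x_high hsq hbr hcm (by omega) (by omega) hk⟩
    · have : j = i + 1 := by omega
      subst this
      exact ⟨i, hi, x i, Or.inr ⟨i, by omega, rfl⟩, T_mul_x_succ hbr hcm (by omega) hk⟩

end Relations


section Counting

variable {x : ℕ → G} {m : ℕ}
variable (hsq : ∀ j, x j * x j = 1)
  (hbr : ∀ j, j + 2 ≤ m → x j * x (j+1) * x j = x (j+1) * x j * x (j+1))
  (hcm : ∀ i j, i + 2 ≤ j → x i * x j = x j * x i)

/-- The subgroup generated by the first `k` generators. -/
def K (x : ℕ → G) (k : ℕ) : Subgroup G := Subgroup.closure (x '' Set.Iio k)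

lemma K_mono {k l : ℕ} (h : k ≤ l) : K x k ≤ K x l :=
  Subgroup.closure_mono (Set.image_mono fun _ hj => lt_of_lt_of_le hj h)

lemma x_mem_K {j k : ℕ} (h : j < k) : x j ∈ K x k :=
  Subgroup.subset_closure ⟨j, h, rfl⟩

lemma T_mem_K {i k l : ℕ} (h : k ≤ l) : T x i k ∈ K x l := by
  apply Subgroup.list_prod_mem
  intro y hy
  simp only [List.mem_reverse, List.mem_map, List.mem_range'_1] at hy
  obtain ⟨j, ⟨hj1, hj2⟩, rfl⟩ := hy
  exact x_mem_K (by omega)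

include hsq hbr hcm in
lemma K_decomp {k : ℕ} (hk : k + 1 ≤ m) :
    ∀ g ∈ K x (k+1), ∃ h ∈ K x k, ∃ i ≤ k + 1, g = h * T x i (k+1) := by
  intro g hg
  induction hg using Subgroup.closure_induction_right with
  | one => exact ⟨1, one_mem _, k+1, le_refl _, by rw [T_self, one_mul]⟩
  | mul_right g hg y hy ih =>
    obtain ⟨h, hh, i, hi, rfl⟩ := ih
    obtain ⟨j, hj, rfl⟩ := hy
    obtain ⟨i', hi', c, hc, heq⟩ := T_step hsq hbr hcm hi (show j < k + 1 from hj) hk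
    refine ⟨h * c, ?_, i', hi', by rw [mul_assoc, heq, mul_assoc]⟩
    rcases hc with rfl | ⟨l, hl, rfl⟩
    · simpa using hh
    · exact mul_mem hh (x_mem_K (by omega))
  | mul_inv_cancel g hg y hy ih =>
    obtain ⟨h, hh, i, hi, rfl⟩ := ih
    obtain ⟨j, hj, rfl⟩ := hy
    rw [show (x j)⁻¹ = x j from inv_eq_of_mul_eq_one_right (hsq j)]
    obtain ⟨i', hi', c, hc, heq⟩ := T_step hsq hbr hcm hi (show j < k + 1 from hj) hk
    refine ⟨h * c, ?_, i', hi', by rw [mul_assoc, heq, mul_assoc]⟩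
    rcases hc with rfl | ⟨l, hl, rfl⟩
    · simpa using hh
    · exact mul_mem hh (x_mem_K (by omega))

include hsq hbr hcm in
lemma K_card : ∀ k, k ≤ m → Finite (K x k) ∧ Nat.card (K x k) ≤ Nat.factorial (k+1) := by
  intro k
  induction k with
  | zero =>
    intro _
    have : K x 0 = ⊥ := by
      rw [K, show x '' Set.Iio 0 = ∅ by ext j; simp, Subgroup.closure_empty]
    rw [this]
    constructor
    · infer_instance
    · simp [Nat.card_eq_fintype_card]
  | succ k ih =>
    intro hk1
    obtain ⟨hfin, hcard⟩ := ih (by omega)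
    have hsurj : Function.Surjective
        (fun p : (K x k) × Fin (k+2) => (⟨(p.1 : G) * T x p.2 (k+1),
          mul_mem (K_mono (by omega) p.1.2) (T_mem_K (le_refl _))⟩ : K x (k+1))) := by
      rintro ⟨g, hg⟩
      obtain ⟨h, hh, i, hi, rfl⟩ := K_decomp hsq hbr hcm (by omega) g hg
      exact ⟨(⟨h, hh⟩, ⟨i, by omega⟩), rfl⟩
    have hfin2 : Finite (K x (k+1)) := Finite.of_surjective _ hsurj
    refine ⟨hfin2, ?_⟩
    calc Nat.card (K x (k+1)) ≤ Nat.card ((K x k) × Fin (k+2)) :=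
          Nat.card_le_card_of_surjective _ hsurj
      _ = Nat.card (K x k) * (k+2) := by simp [Nat.card_prod]
      _ ≤ Nat.factorial (k+1) * (k+2) := Nat.mul_le_mul_right _ hcard
      _ = Nat.factorial (k+2) := by rw [Nat.factorial_succ (k+1)]; ring

end Counting

end SymPres

section Stage2

open Equiv CoxeterMatrix

lemma braid_of_pow3 {G : Type*} [Group G] {a b : G} (ha : a * a = 1) (hb : b * b = 1)
    (h : (a * b)^3 = 1) : a * b * a = b * a * b := by
  have hai : a⁻¹ = a := inv_eq_of_mul_eq_one_right ha
  have hbi : b⁻¹ = b := inv_eq_of_mul_eq_one_right hb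
  have h2 : (a*b*a) * (b*a*b) = (a*b)^3 := by
    rw [pow_succ, pow_succ, pow_one]
    simp only [mul_assoc]
  rw [h] at h2
  have h3 := eq_inv_of_mul_eq_one_left h2
  rw [h3, mul_inv_rev, mul_inv_rev, hai, hbi, mul_assoc]

lemma comm_of_pow2 {G : Type*} [Group G] {a b : G} (ha : a * a = 1) (hb : b * b = 1)
    (h : (a * b)^2 = 1) : a * b = b * a := by
  have hai : a⁻¹ = a := inv_eq_of_mul_eq_one_right ha
  have hbi : b⁻¹ = b := inv_eq_of_mul_eq_one_right hb
  have h2 : (a*b) * (a*b) = 1 := by rw [← pow_two]; exact h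
  have h3 := eq_inv_of_mul_eq_one_left h2
  rw [h3, mul_inv_rev, hai, hbi]

lemma closure_range_simple {B W : Type*} [Group W] {M : CoxeterMatrix B}
    (cs : CoxeterSystem M W) : Subgroup.closure (Set.range cs.simple) = ⊤ := by
  rw [eq_top_iff]
  intro w _
  obtain ⟨ω, rfl⟩ := cs.wordProd_surjective w
  apply Subgroup.list_prod_mem
  intro y hy
  simp only [List.mem_map] at hy
  obtain ⟨i, _, rfl⟩ := hy
  exact Subgroup.subset_closure ⟨i, rfl⟩

noncomputable section

def M5 : CoxeterMatrix (Fin 5) := CoxeterMatrix.Aₙ 5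
abbrev P6 : Type := M5.Group
def cs5 : CoxeterSystem M5 P6 := M5.toCoxeterSystem

/-- adjacent transpositions in `Perm (Fin 6)` -/
def sw (i : Fin 5) : Equiv.Perm (Fin 6) := Equiv.swap i.castSucc i.succ

def xP : ℕ → P6 := fun j => if h : j < 5 then cs5.simple ⟨j, h⟩ else 1

lemma xP_sq : ∀ j, xP j * xP j = 1 := by
  intro j
  unfold xP
  split
  · exact cs5.simple_mul_simple_self _
  · simp

lemma M5_adj : ∀ (a b : Fin 5), (b:ℕ) = (a:ℕ) + 1 → M5 a b = 3 := by
  intro a b; fin_cases a <;> fin_cases b <;> decide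

lemma M5_far : ∀ (i j : Fin 5), (i:ℕ) + 2 ≤ j → M5 i j = 2 := by
  intro i j; fin_cases i <;> fin_cases j <;> decide

lemma xP_br : ∀ j, j + 2 ≤ 5 → xP j * xP (j+1) * xP j = xP (j+1) * xP j * xP (j+1) := by
  intro j hj
  have h1 : xP j = cs5.simple ⟨j, by omega⟩ := by unfold xP; rw [dif_pos]
  have h2 : xP (j+1) = cs5.simple ⟨j+1, by omega⟩ := by unfold xP; rw [dif_pos]
  rw [h1, h2]
  apply braid_of_pow3 (cs5.simple_mul_simple_self _) (cs5.simple_mul_simple_self _)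
  have := cs5.simple_mul_simple_pow ⟨j, by omega⟩ ⟨j+1, by omega⟩
  rwa [M5_adj ⟨j, by omega⟩ ⟨j+1, by omega⟩ rfl] at this

lemma xP_cm : ∀ i j, i + 2 ≤ j → xP i * xP j = xP j * xP i := by
  intro i j hij
  by_cases hj : j < 5
  · have hi : i < 5 := by omega
    have h1 : xP i = cs5.simple ⟨i, hi⟩ := by unfold xP; rw [dif_pos]
    have h2 : xP j = cs5.simple ⟨j, hj⟩ := by unfold xP; rw [dif_pos]
    rw [h1, h2]
    apply comm_of_pow2 (cs5.simple_mul_simple_self _) (cs5.simple_mul_simple_self _)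
    have := cs5.simple_mul_simple_pow ⟨i, hi⟩ ⟨j, hj⟩
    rwa [M5_far ⟨i, hi⟩ ⟨j, hj⟩ hij] at this
  · have : xP j = 1 := by unfold xP; rw [dif_neg hj]
    rw [this, one_mul, mul_one]

lemma K_xP_top : SymPres.K xP 5 = ⊤ := by
  have himg : xP '' Set.Iio 5 = Set.range cs5.simple := by
    ext w
    constructor
    · rintro ⟨j, hj, rfl⟩
      exact ⟨⟨j, hj⟩, by unfold xP; rw [dif_pos (show j < 5 from hj)]⟩
    · rintro ⟨i, rfl⟩
      refine ⟨i.val, i.isLt, ?_⟩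
      unfold xP
      rw [dif_pos i.isLt]
  rw [SymPres.K, himg, closure_range_simple]

lemma P6_finite_card : Nat.card P6 ≤ 720 ∧ Finite P6 := by
  obtain ⟨hfin, hcard⟩ := SymPres.K_card xP_sq xP_br xP_cm 5 (le_refl _)
  rw [K_xP_top] at hfin hcard
  constructor
  · calc Nat.card P6 = Nat.card (⊤ : Subgroup P6) :=
        (Nat.card_congr Subgroup.topEquiv.toEquiv).symm
    _ ≤ 720 := hcard
  · exact Finite.of_equiv _ Subgroup.topEquiv.toEquiv

lemma sw_liftable : M5.IsLiftable sw := by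
  have : ∀ i i' : Fin 5, (sw i * sw i') ^ M5 i i' = 1 := by decide
  exact this

def thetaP : P6 →* Equiv.Perm (Fin 6) := cs5.lift ⟨sw, sw_liftable⟩

lemma thetaP_simple (i : Fin 5) : thetaP (cs5.simple i) = sw i :=
  cs5.lift_apply_simple sw_liftable i

lemma finRotate_eq : finRotate 6 = sw 0 * sw 1 * sw 2 * sw 3 * sw 4 := by decide

lemma thetaP_surj : Function.Surjective thetaP := by
  have hsw : ∀ i, sw i ∈ thetaP.range := fun i => ⟨cs5.simple i, thetaP_simple i⟩
  have htop : Subgroup.closure ({finRotate 6, Equiv.swap 0 ((finRotate 6) 0)} :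
      Set (Equiv.Perm (Fin 6))) = ⊤ :=
    Equiv.Perm.closure_cycle_adjacent_swap (isCycle_finRotate (n := 4))
      (support_finRotate (n := 4)) 0
  rw [← MonoidHom.range_eq_top]
  rw [eq_top_iff, ← htop, Subgroup.closure_le]
  rintro σ (rfl | h)
  · rw [finRotate_eq]
    exact mul_mem (mul_mem (mul_mem (mul_mem (hsw 0) (hsw 1)) (hsw 2)) (hsw 3)) (hsw 4)
  · simp only [Set.mem_singleton_iff] at h
    subst h
    have : Equiv.swap (0 : Fin 6) ((finRotate 6) 0) = sw 0 := by decide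
    rw [this]
    exact hsw 0

lemma thetaP_bij : Function.Bijective thetaP := by
  obtain ⟨hcard, hfin⟩ := P6_finite_card
  haveI : Finite P6 := hfin
  rw [Nat.bijective_iff_surjective_and_card]
  refine ⟨thetaP_surj, le_antisymm ?_ ?_⟩
  · have h720 : Nat.card (Equiv.Perm (Fin 6)) = 720 := by
      rw [Nat.card_eq_fintype_card, Fintype.card_perm, Fintype.card_fin]
      rfl
    omega
  · exact Nat.card_le_card_of_surjective thetaP thetaP_surj

/-- `Perm (Fin 6)` is isomorphic to the Coxeter group of type `A₅`. -/
def permEquiv : P6 ≃* Equiv.Perm (Fin 6) := MulEquiv.ofBijective thetaP thetaP_bij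

end
end Stage2

section Stage3
open Equiv CoxeterMatrix

noncomputable section

abbrev W6 : Type := (CoxeterMatrix.E₆).Group
def cs6 : CoxeterSystem CoxeterMatrix.E₆ W6 := (CoxeterMatrix.E₆).toCoxeterSystem

/-- The A₅ chain inside the E₆ diagram. -/
def chain : Fin 5 → Fin 6 := ![0, 2, 3, 4, 5]

lemma M5_chain : ∀ i j : Fin 5, M5 i j = CoxeterMatrix.E₆ (chain i) (chain j) := by
  intro i j; fin_cases i <;> fin_cases j <;> decide

lemma chain_liftable : M5.IsLiftable (fun i => cs6.simple (chain i)) := by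
  intro i j
  rw [M5_chain i j]
  exact cs6.simple_mul_simple_pow (chain i) (chain j)

def liftW : P6 →* W6 := cs5.lift ⟨fun i => cs6.simple (chain i), chain_liftable⟩

def psi : Equiv.Perm (Fin 6) →* W6 := liftW.comp permEquiv.symm.toMonoidHom

lemma psi_sw (i : Fin 5) : psi (sw i) = cs6.simple (chain i) := by
  have h1 : permEquiv (cs5.simple i) = sw i := thetaP_simple i
  have h2 : permEquiv.symm (sw i) = cs5.simple i := by
    rw [← h1, MulEquiv.symm_apply_apply]
  show liftW (permEquiv.symm (sw i)) = _
  rw [h2]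
  exact cs5.lift_apply_simple chain_liftable i

lemma simple_comm {i j : Fin 6} (h : CoxeterMatrix.E₆ i j = 2) :
    Commute (cs6.simple i) (cs6.simple j) := by
  have := cs6.simple_mul_simple_pow i j
  rw [h] at this
  exact comm_of_pow2 (cs6.simple_mul_simple_self i) (cs6.simple_mul_simple_self j) this

/-- explicit enumeration of the two S₃ factors of the stabilizer of {0,1,2} -/
def Aset : List (Equiv.Perm (Fin 6)) := [1, sw 0, sw 1, sw 0 * sw 1, sw 1 * sw 0, sw 0 * sw 1 * sw 0]
def Bset : List (Equiv.Perm (Fin 6)) := [1, sw 3, sw 4, sw 3 * sw 4, sw 4 * sw 3, sw 3 * sw 4 * sw 3]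

set_option maxRecDepth 100000 in
open Pointwise in
lemma stab_decomp : ∀ τ : Equiv.Perm (Fin 6), τ • ({0,1,2} : Finset (Fin 6)) = {0,1,2} →
    ∃ a ∈ Aset, ∃ b ∈ Bset, τ = a * b := by decide

lemma psi_comm_Aset : ∀ a ∈ Aset, Commute (psi a) (cs6.simple 1) := by
  have c0 : Commute (psi (sw 0)) (cs6.simple 1) := by
    rw [psi_sw]; exact simple_comm (by decide)
  have c1 : Commute (psi (sw 1)) (cs6.simple 1) := by
    rw [psi_sw]; exact simple_comm (by decide)
  intro a ha
  simp only [Aset, List.mem_cons, List.not_mem_nil, or_false] at ha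
  rcases ha with rfl | rfl | rfl | rfl | rfl | rfl
  · rw [map_one]; exact Commute.one_left _
  · exact c0
  · exact c1
  · rw [map_mul]; exact c0.mul_left c1
  · rw [map_mul]; exact c1.mul_left c0
  · rw [map_mul, map_mul]; exact (c0.mul_left c1).mul_left c0

lemma psi_comm_Bset : ∀ b ∈ Bset, Commute (psi b) (cs6.simple 1) := by
  have c0 : Commute (psi (sw 3)) (cs6.simple 1) := by
    rw [psi_sw]; exact simple_comm (by decide)
  have c1 : Commute (psi (sw 4)) (cs6.simple 1) := by
    rw [psi_sw]; exact simple_comm (by decide)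
  intro a ha
  simp only [Bset, List.mem_cons, List.not_mem_nil, or_false] at ha
  rcases ha with rfl | rfl | rfl | rfl | rfl | rfl
  · rw [map_one]; exact Commute.one_left _
  · exact c0
  · exact c1
  · rw [map_mul]; exact c0.mul_left c1
  · rw [map_mul]; exact c1.mul_left c0
  · rw [map_mul, map_mul]; exact (c0.mul_left c1).mul_left c0

open Pointwise in
lemma psi_stab_comm (τ : Equiv.Perm (Fin 6)) (h : τ • ({0,1,2} : Finset (Fin 6)) = {0,1,2}) :
    Commute (psi τ) (cs6.simple 1) := by
  obtain ⟨a, ha, b, hb, rfl⟩ := stab_decomp τ h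
  rw [map_mul]
  exact (psi_comm_Aset a ha).mul_left (psi_comm_Bset b hb)

/-- closure of the adjacent transpositions is everything -/
lemma sw_closure_top : Subgroup.closure (Set.range sw) = ⊤ := by
  have htop : Subgroup.closure ({finRotate 6, Equiv.swap 0 ((finRotate 6) 0)} :
      Set (Equiv.Perm (Fin 6))) = ⊤ :=
    Equiv.Perm.closure_cycle_adjacent_swap (isCycle_finRotate (n := 4))
      (support_finRotate (n := 4)) 0
  rw [eq_top_iff, ← htop, Subgroup.closure_le]
  have hsw : ∀ i, sw i ∈ Subgroup.closure (Set.range sw) :=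
    fun i => Subgroup.subset_closure ⟨i, rfl⟩
  rintro σ (rfl | h)
  · rw [finRotate_eq]
    exact mul_mem (mul_mem (mul_mem (mul_mem (hsw 0) (hsw 1)) (hsw 2)) (hsw 3)) (hsw 4)
  · simp only [Set.mem_singleton_iff] at h
    subst h
    rw [show Equiv.swap (0 : Fin 6) ((finRotate 6) 0) = sw 0 by decide]
    exact hsw 0

lemma perm_hom_ext {H : Type*} [Group H] {f g : Equiv.Perm (Fin 6) →* H}
    (h : ∀ i, f (sw i) = g (sw i)) : f = g := by
  have : Set.EqOn f g (Subgroup.closure (Set.range sw)) :=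
    MonoidHom.eqOn_closure (by rintro σ ⟨i, rfl⟩; exact h i)
  ext σ
  exact this (by rw [sw_closure_top]; trivial)

end
end Stage3

section Stage4
open Equiv CoxeterMatrix SemidirectProduct Pointwise

noncomputable section

def S0 : KSub 6 3 := ⟨{0,1,2}, by decide⟩
def sg0 : Equiv.Perm (Fin 6) := Equiv.swap 2 3

abbrev Tgt : Type := TargetGroup 6 3 S0 sg0

/-- quotient map -/
def QN : Progenitor 6 3 →* Tgt :=
  QuotientGroup.mk' (Subgroup.normalClosure {(inl (tFP S0) * inr sg0) ^ 3})

def tb (S : KSub 6 3) : Tgt := tbar S0 sg0 S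
def pbh : Equiv.Perm (Fin 6) →* Tgt := pbar S0 sg0

lemma tb_eq (S : KSub 6 3) : tb S = QN (inl (tFP S)) := rfl
lemma pbh_eq (σ : Equiv.Perm (Fin 6)) : pbh σ = QN (inr σ) := rfl

lemma fpAut_tFP (σ : Equiv.Perm (Fin 6)) (S : KSub 6 3) :
    (fpAut 6 3 σ) (tFP S) = tFP (σ • S) := by
  show fpHom σ (tFP S) = tFP (σ • S)
  exact Monoid.CoprodI.lift_of _ _

lemma pb_conj_tb (σ : Equiv.Perm (Fin 6)) (S : KSub 6 3) :
    pbh σ * tb S * (pbh σ)⁻¹ = tb (σ • S) := by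
  have h1 : (inr σ * inl (tFP S) * (inr σ)⁻¹ : Progenitor 6 3) = inl (tFP (σ • S)) := by
    rw [← fpAut_tFP σ S, SemidirectProduct.inl_aut, map_inv]
  rw [tb_eq, tb_eq, pbh_eq, ← map_mul, ← map_inv, ← map_mul, h1]

lemma tFP_sq (S : KSub 6 3) : tFP S * tFP S = 1 := by
  unfold tFP
  rw [← map_mul, show (Multiplicative.ofAdd (1 : ZMod 2)) * (Multiplicative.ofAdd (1 : ZMod 2))
    = 1 by decide, map_one]

lemma tb_sq (S : KSub 6 3) : tb S * tb S = 1 := by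
  rw [tb_eq, ← map_mul, ← map_mul, tFP_sq, map_one, map_one]

lemma mul_pow_swap {H : Type*} [Group H] (a b : H) (n : ℕ) : (a*b)^n * a = a * (b*a)^n := by
  induction n with
  | zero => simp
  | succ n ih =>
    rw [pow_succ, pow_succ']
    calc (a*b)^n * (a*b) * a = (a*b)^n * a * (b*a) := by group
      _ = a * (b*a)^n * (b*a) := by rw [ih]
      _ = a * (b * a * (b * a) ^ n) := by rw [mul_assoc, ← pow_succ, pow_succ']

lemma pow_swap_eq_one {H : Type*} [Group H] {a b : H} {n : ℕ} (h : (a*b)^n = 1) :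
    (b*a)^n = 1 := by
  have h2 := mul_pow_swap a b n
  rw [h, one_mul] at h2
  exact left_eq_mul.mp h2

lemma rel_pow : (tb S0 * pbh sg0)^3 = 1 := by
  rw [tb_eq, pbh_eq, ← map_mul, ← map_pow]
  show QuotientGroup.mk _ = 1
  rw [QuotientGroup.eq_one_iff]
  exact Subgroup.subset_normalClosure rfl

lemma rel_pow' : (pbh sg0 * tb S0)^3 = 1 := pow_swap_eq_one rel_pow

lemma sg0_eq_sw2' : sg0 = sw 2 := by decide

lemma rel_pow_sw : (tb S0 * pbh (sw 2))^3 = 1 := by rw [← sg0_eq_sw2']; exact rel_pow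

lemma rel_pow_sw' : (pbh (sw 2) * tb S0)^3 = 1 := pow_swap_eq_one rel_pow_sw

lemma hTT : (tb S0 * tb S0)^(1:ℕ) = 1 := by rw [pow_one]; exact tb_sq S0

lemma hperm (σ τ : Equiv.Perm (Fin 6)) (m : ℕ) (h : (σ * τ)^m = 1) :
    (pbh σ * pbh τ)^m = 1 := by
  rw [← map_mul, ← map_pow, h, map_one]

lemma hcomm (σ : Equiv.Perm (Fin 6)) (h1 : σ • S0 = S0) (h2 : σ * σ = 1) :
    (tb S0 * pbh σ)^2 = 1 := by
  have hc := pb_conj_tb σ S0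
  rw [h1] at hc
  calc (tb S0 * pbh σ)^2 = tb S0 * (pbh σ * tb S0 * (pbh σ)⁻¹) * (pbh σ * pbh σ) := by
        rw [pow_two]; group
    _ = tb S0 * tb S0 * (pbh σ * pbh σ) := by rw [hc]
    _ = 1 := by rw [tb_sq, ← map_mul, h2, map_one, one_mul]

lemma hcomm' (σ : Equiv.Perm (Fin 6)) (h1 : σ • S0 = S0) (h2 : σ * σ = 1) :
    (pbh σ * tb S0)^2 = 1 := pow_swap_eq_one (hcomm σ h1 h2)

/-- the images of the six Coxeter generators of `E₆` in the target group -/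
def fvec : Fin 6 → Tgt := fun i => match i with
  | 0 => pbh (sw 0)
  | 1 => tb S0
  | 2 => pbh (sw 1)
  | 3 => pbh (sw 2)
  | 4 => pbh (sw 3)
  | 5 => pbh (sw 4)

set_option maxRecDepth 10000 in
lemma liftable6 : (CoxeterMatrix.E₆).IsLiftable fvec := by
  intro i j
  fin_cases i <;> fin_cases j
  · exact hperm _ _ _ (by decide)
  · exact hcomm' (sw 0) (by decide) (by decide)
  · exact hperm _ _ _ (by decide)
  · exact hperm _ _ _ (by decide)
  · exact hperm _ _ _ (by decide)
  · exact hperm _ _ _ (by decide)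
  · exact hcomm (sw 0) (by decide) (by decide)
  · exact hTT
  · exact hcomm (sw 1) (by decide) (by decide)
  · exact rel_pow_sw
  · exact hcomm (sw 3) (by decide) (by decide)
  · exact hcomm (sw 4) (by decide) (by decide)
  · exact hperm _ _ _ (by decide)
  · exact hcomm' (sw 1) (by decide) (by decide)
  · exact hperm _ _ _ (by decide)
  · exact hperm _ _ _ (by decide)
  · exact hperm _ _ _ (by decide)
  · exact hperm _ _ _ (by decide)
  · exact hperm _ _ _ (by decide)
  · exact rel_pow_sw'
  · exact hperm _ _ _ (by decide)
  · exact hperm _ _ _ (by decide)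
  · exact hperm _ _ _ (by decide)
  · exact hperm _ _ _ (by decide)
  · exact hperm _ _ _ (by decide)
  · exact hcomm' (sw 3) (by decide) (by decide)
  · exact hperm _ _ _ (by decide)
  · exact hperm _ _ _ (by decide)
  · exact hperm _ _ _ (by decide)
  · exact hperm _ _ _ (by decide)
  · exact hperm _ _ _ (by decide)
  · exact hcomm' (sw 4) (by decide) (by decide)
  · exact hperm _ _ _ (by decide)
  · exact hperm _ _ _ (by decide)
  · exact hperm _ _ _ (by decide)
  · exact hperm _ _ _ (by decide)

def fHom : W6 →* Tgt := cs6.lift ⟨fvec, liftable6⟩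

lemma fHom_simple (i : Fin 6) : fHom (cs6.simple i) = fvec i :=
  cs6.lift_apply_simple liftable6 i

lemma fHom_psi_hom : fHom.comp psi = pbh := by
  apply perm_hom_ext
  intro i
  show fHom (psi (sw i)) = pbh (sw i)
  rw [psi_sw]
  fin_cases i <;> exact (fHom_simple _).trans rfl

lemma fHom_psi (σ : Equiv.Perm (Fin 6)) : fHom (psi σ) = pbh σ :=
  DFunLike.congr_fun fHom_psi_hom σ

/-- the canonical permutation taking `S0` to `S` -/
def sigS (S : KSub 6 3) : Equiv.Perm (Fin 6) :=
  Equiv.extendSubtype (Finset.equivOfCardEq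
    (show S0.1.card = S.1.card by rw [S0.2, S.2]))

lemma sigS_smul (S : KSub 6 3) : sigS S • S0 = S := by
  apply Subtype.ext
  show sigS S • S0.1 = S.1
  have hsub : (sigS S • S0.1 : Finset (Fin 6)) ⊆ S.1 := by
    intro y hy
    rw [Finset.mem_smul_finset] at hy
    obtain ⟨x, hx, rfl⟩ := hy
    rw [show (sigS S) • x = sigS S x from rfl,
      sigS, Equiv.extendSubtype_apply_of_mem _ x hx]
    exact Finset.coe_mem _
  apply Finset.eq_of_subset_of_card_le hsub
  rw [Finset.card_smul_finset, S0.2, S.2]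

/-- homs out of `Multiplicative (ZMod 2)` -/
def z2Hom {H : Type*} [Monoid H] (g : H) (hg : g * g = 1) : Multiplicative (ZMod 2) →* H where
  toFun c := g ^ (Multiplicative.toAdd c).val
  map_one' := pow_zero g
  map_mul' c d := by
    have key : ∀ u v : ZMod 2, g ^ (u + v).val = g ^ u.val * g ^ v.val := by
      have hz : ∀ w : ZMod 2, w = 0 ∨ w = 1 := by decide
      intro u v
      rcases hz u with rfl | rfl <;> rcases hz v with rfl | rfl
      · show g ^ (0:ℕ) = g ^ (0:ℕ) * g ^ (0:ℕ); rw [pow_zero, one_mul]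
      · show g ^ (1:ℕ) = g ^ (0:ℕ) * g ^ (1:ℕ); rw [pow_zero, one_mul]
      · show g ^ (1:ℕ) = g ^ (1:ℕ) * g ^ (0:ℕ); rw [pow_zero, mul_one]
      · show g ^ (0:ℕ) = g ^ (1:ℕ) * g ^ (1:ℕ); rw [pow_zero, pow_one]; exact hg.symm
    exact key _ _

lemma z2Hom_gen {H : Type*} [Monoid H] (g : H) (hg : g * g = 1) :
    z2Hom g hg (Multiplicative.ofAdd 1) = g := pow_one g

lemma z2ext {H : Type*} [Monoid H] {f₁ f₂ : Multiplicative (ZMod 2) →* H}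
    (h : f₁ (Multiplicative.ofAdd 1) = f₂ (Multiplicative.ofAdd 1)) : f₁ = f₂ := by
  refine MonoidHom.ext fun c => ?_
  have hz : ∀ w : Multiplicative (ZMod 2), w = 1 ∨ w = Multiplicative.ofAdd 1 := by decide
  rcases hz c with rfl | rfl
  · rw [map_one, map_one]
  · exact h

def that (S : KSub 6 3) : W6 := psi (sigS S) * cs6.simple 1 * (psi (sigS S))⁻¹

lemma that_sq (S : KSub 6 3) : that S * that S = 1 := by
  unfold that
  calc psi (sigS S) * cs6.simple 1 * (psi (sigS S))⁻¹ *
        (psi (sigS S) * cs6.simple 1 * (psi (sigS S))⁻¹)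
      = psi (sigS S) * (cs6.simple 1 * cs6.simple 1) * (psi (sigS S))⁻¹ := by group
    _ = 1 := by rw [cs6.simple_mul_simple_self]; group

def phiW : FP 6 3 →* W6 := Monoid.CoprodI.lift (fun S => z2Hom (that S) (that_sq S))

lemma phiW_tFP (S : KSub 6 3) : phiW (tFP S) = that S := by
  unfold phiW tFP
  rw [Monoid.CoprodI.lift_of]
  exact z2Hom_gen _ _

lemma smul_S0_finset {τ : Equiv.Perm (Fin 6)} (h : τ • S0 = S0) :
    τ • ({0,1,2} : Finset (Fin 6)) = {0,1,2} := congrArg Subtype.val h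

lemma that_conj {τ : Equiv.Perm (Fin 6)} (h : τ • S0 = S0) :
    psi τ * cs6.simple 1 * (psi τ)⁻¹ = cs6.simple 1 := by
  have hc := psi_stab_comm τ (smul_S0_finset h)
  rw [hc.eq]; group

lemma that_S0 : that S0 = cs6.simple 1 := that_conj (sigS_smul S0)

lemma psi_conj_that (σ : Equiv.Perm (Fin 6)) (S : KSub 6 3) :
    psi σ * that S * (psi σ)⁻¹ = that (σ • S) := by
  set g := sigS S with hg
  set g' := sigS (σ • S) with hg'
  have hτ : (g'⁻¹ * (σ * g)) • S0 = S0 := by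
    rw [mul_smul, mul_smul, sigS_smul S, inv_smul_eq_iff, sigS_smul (σ • S)]
  have hconj := that_conj hτ
  have hpsi : psi (g'⁻¹ * (σ * g)) = (psi g')⁻¹ * (psi σ * psi g) := by
    rw [map_mul, map_mul, map_inv]
  rw [hpsi] at hconj
  unfold that
  rw [← hg, ← hg']
  calc psi σ * (psi g * cs6.simple 1 * (psi g)⁻¹) * (psi σ)⁻¹
      = psi g' * ((psi g')⁻¹ * (psi σ * psi g) * cs6.simple 1 *
          ((psi g')⁻¹ * (psi σ * psi g))⁻¹) * (psi g')⁻¹ := by group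
    _ = psi g' * cs6.simple 1 * (psi g')⁻¹ := by rw [hconj]

lemma compatW : ∀ σ : Equiv.Perm (Fin 6),
    phiW.comp ((fpAut 6 3 σ).toMonoidHom) = (MulAut.conj (psi σ)).toMonoidHom.comp phiW := by
  intro σ
  apply Monoid.CoprodI.ext_hom
  intro S
  apply z2ext
  simp only [MonoidHom.comp_apply]
  show phiW ((fpAut 6 3 σ) (tFP S)) = MulAut.conj (psi σ) (phiW (tFP S))
  rw [fpAut_tFP, phiW_tFP, phiW_tFP, MulAut.conj_apply, psi_conj_that]

def gPre : Progenitor 6 3 →* W6 := SemidirectProduct.lift phiW psi compatW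

lemma sg0_eq_sw2 : sg0 = sw 2 := by decide

lemma psi_sg0 : psi sg0 = cs6.simple 3 := by
  rw [sg0_eq_sw2, psi_sw]; rfl

lemma gPre_rel : gPre ((inl (tFP S0) * inr sg0)^3) = 1 := by
  rw [map_pow, map_mul]
  show (gPre (inl (tFP S0)) * gPre (inr sg0))^3 = 1
  rw [show gPre (inl (tFP S0)) = phiW (tFP S0) from SemidirectProduct.lift_inl _ _ _ _,
    show gPre (inr sg0) = psi sg0 from SemidirectProduct.lift_inr _ _ _ _,
    phiW_tFP, that_S0, psi_sg0]
  have h := cs6.simple_mul_simple_pow 1 3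
  rwa [show (CoxeterMatrix.E₆) 1 3 = 3 by decide] at h

def gHom : Tgt →* W6 :=
  QuotientGroup.lift _ gPre (by
    apply Subgroup.normalClosure_le_normal
    intro x hx
    rw [Set.mem_singleton_iff] at hx
    subst hx
    show gPre _ = 1
    exact gPre_rel)

lemma gHom_QN (x : Progenitor 6 3) : gHom (QN x) = gPre x := rfl

lemma gHom_tb (S : KSub 6 3) : gHom (tb S) = that S := by
  rw [tb_eq, gHom_QN]
  exact (SemidirectProduct.lift_inl phiW psi compatW (tFP S)).trans (phiW_tFP S)

lemma gHom_pbh (σ : Equiv.Perm (Fin 6)) : gHom (pbh σ) = psi σ := by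
  rw [pbh_eq, gHom_QN]
  exact SemidirectProduct.lift_inr _ _ _ _

lemma gf_hom : gHom.comp fHom = MonoidHom.id W6 := by
  apply cs6.ext_simple
  intro i
  show gHom (fHom (cs6.simple i)) = cs6.simple i
  rw [fHom_simple]
  fin_cases i
  · show gHom (pbh (sw 0)) = cs6.simple 0
    rw [gHom_pbh, psi_sw]; rfl
  · show gHom (tb S0) = cs6.simple 1
    rw [gHom_tb, that_S0]
  · show gHom (pbh (sw 1)) = cs6.simple 2
    rw [gHom_pbh, psi_sw]; rfl
  · show gHom (pbh (sw 2)) = cs6.simple 3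
    rw [gHom_pbh, psi_sw]; rfl
  · show gHom (pbh (sw 3)) = cs6.simple 4
    rw [gHom_pbh, psi_sw]; rfl
  · show gHom (pbh (sw 4)) = cs6.simple 5
    rw [gHom_pbh, psi_sw]; rfl

lemma fg_hom : fHom.comp gHom = MonoidHom.id Tgt := by
  apply QuotientGroup.monoidHom_ext
  apply SemidirectProduct.hom_ext
  · apply Monoid.CoprodI.ext_hom
    intro S
    apply z2ext
    simp only [MonoidHom.comp_apply]
    show fHom (gHom (QN (inl (tFP S)))) = MonoidHom.id Tgt (QN (inl (tFP S)))
    rw [← tb_eq, gHom_tb]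
    show fHom (that S) = tb S
    unfold that
    rw [map_mul, map_mul, map_inv, fHom_psi, show fHom (cs6.simple 1) = tb S0 from
      (fHom_simple 1).trans rfl]
    rw [pb_conj_tb, sigS_smul]
  · apply perm_hom_ext
    intro i
    simp only [MonoidHom.comp_apply]
    show fHom (gHom (QN (inr (sw i)))) = MonoidHom.id Tgt (QN (inr (sw i)))
    rw [← pbh_eq, gHom_pbh, fHom_psi]
    rfl

def isoTW : Tgt ≃* W6 where
  toFun := gHom
  invFun := fHom
  left_inv := fun x => DFunLike.congr_fun fg_hom x
  right_inv := fun w => DFunLike.congr_fun gf_hom w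
  map_mul' := map_mul gHom

end
end Stage4


/-- **Statement.** The target group obtained by factoring the progenitor
`2^{⋆C(6,3)} : S6` (with `S6` acting on the 3-element subsets of `{1,…,6}`) by the single
relator `(t_{123}·(3 4))³` is isomorphic to the Coxeter group of type E₆. -/
theorem targetGroup_E_iso_coxeterGroup_E₆ :
    Nonempty
      (TargetGroup 6 3 ⟨{0, 1, 2}, by decide⟩ (Equiv.swap 2 3) ≃*
        (CoxeterMatrix.E₆).Group) := by
  exact ⟨isoTW⟩
end

section
/- Let n ≥ 2 and let N be a subgroup of the symmetric group Sym(Fin n) which is perfect and whose natural action on Fin n is primitive, and let P = F ⋊ N be the progenitor. Then every homomorphic image of P possesses a perfect subgroup of index at most 2: for every group G and every surjective group homomorphism φ : P → G, the commutator subgroup of G is perfect and has index dividing 2 in G. -/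
open Monoid

/-- The free product of `n` copies of `ℤ/2ℤ`, indexed by `Fin n`. -/
abbrev FP1 (n : ℕ) := Monoid.CoprodI (fun _ : Fin n => Multiplicative (ZMod 2))

/-- The symmetric generator `t_i`. -/
def tFP1 {n : ℕ} (i : Fin n) : FP1 n :=
  Monoid.CoprodI.of (i := i) (Multiplicative.ofAdd (1 : ZMod 2))

/-- The endomorphism of the free product induced by a permutation of `Fin n`. -/
def fp1Hom {n : ℕ} (σ : Equiv.Perm (Fin n)) : FP1 n →* FP1 n :=
  Monoid.CoprodI.lift
    (fun i => Monoid.CoprodI.of (M := fun _ : Fin n => Multiplicative (ZMod 2)) (i := σ i))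

lemma fp1Hom_comp {n : ℕ} (σ τ : Equiv.Perm (Fin n)) :
    (fp1Hom (n := n) σ).comp (fp1Hom τ) = fp1Hom (σ * τ) := by
  apply Monoid.CoprodI.ext_hom
  intro i
  ext x
  simp [fp1Hom, Monoid.CoprodI.lift_of]

lemma fp1Hom_one {n : ℕ} : fp1Hom (n := n) 1 = MonoidHom.id _ := by
  apply Monoid.CoprodI.ext_hom
  intro i
  ext x
  simp [fp1Hom, Monoid.CoprodI.lift_of]

/-- The action of `Sym(Fin n)` on the free product, permuting the free factors. -/
def fp1Aut (n : ℕ) : Equiv.Perm (Fin n) →* MulAut (FP1 n) :=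
  MonoidHom.mk' (fun σ =>
    { toFun := fp1Hom σ
      invFun := fp1Hom σ⁻¹
      left_inv := fun x => by
        have h := fp1Hom_comp (n := n) σ⁻¹ σ
        rw [inv_mul_cancel, fp1Hom_one] at h
        exact DFunLike.congr_fun h x
      right_inv := fun x => by
        have h := fp1Hom_comp (n := n) σ σ⁻¹
        rw [mul_inv_cancel, fp1Hom_one] at h
        exact DFunLike.congr_fun h x
      map_mul' := map_mul _ })
    (fun σ τ => by
      ext x
      exact (DFunLike.congr_fun (fp1Hom_comp (n := n) σ τ) x).symm)

/-- The progenitor `2^{⋆n} : N`, for a subgroup `N` of `Sym(Fin n)`. -/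
abbrev Progenitor1 (n : ℕ) (N : Subgroup (Equiv.Perm (Fin n))) :=
  FP1 n ⋊[(fp1Aut n).comp N.subtype] ↥N

open scoped commutatorElement

section Helpers
open SemidirectProduct

variable {n : ℕ} {N : Subgroup (Equiv.Perm (Fin n))} {G : Type*} [Group G]

lemma tFP1_sq (i : Fin n) : tFP1 i * tFP1 i = 1 := by
  rw [tFP1, ← map_mul, ← ofAdd_add]
  have : (1 + 1 : ZMod 2) = 0 := by decide
  rw [this, ofAdd_zero, map_one]

lemma conj_t' (ψ : Progenitor1 n N →* G) (π : ↥N) (i : Fin n) :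
    ψ (inr π) * ψ (inl (tFP1 i)) * (ψ (inr π))⁻¹ = ψ (inl (tFP1 (π.val i))) := by
  have h2 : (((fp1Aut n).comp N.subtype) π) (tFP1 i) = tFP1 (π.val i) := by
    show fp1Hom π.val (tFP1 i) = _
    simp [fp1Hom, tFP1, Monoid.CoprodI.lift_of]
  have h := congrArg ψ (inl_aut (φ := (fp1Aut n).comp N.subtype) π (tFP1 i))
  rw [h2] at h
  rw [h]
  simp [map_mul]

lemma mem_closure_aux (ψ : Progenitor1 n N →* G) (hψ : Function.Surjective ψ) (x : G) :
    x ∈ Subgroup.closure ((Set.range fun i => ψ (inl (tFP1 i))) ∪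
      Set.range fun π : ↥N => ψ (inr π)) := by
  set S : Set G := (Set.range fun i => ψ (inl (tFP1 i))) ∪
      Set.range fun π : ↥N => ψ (inr π) with hS
  obtain ⟨p, rfl⟩ := hψ x
  rw [← inl_left_mul_inr_right p, map_mul]
  have hr : ψ (inr p.right) ∈ Subgroup.closure S :=
    Subgroup.subset_closure (Or.inr ⟨p.right, rfl⟩)
  refine mul_mem ?_ hr
  induction p.left using Monoid.CoprodI.induction_on with
  | one => simp only [map_one]; exact one_mem _
  | of i m =>
      rcases (by decide : ∀ m : Multiplicative (ZMod 2), m = 1 ∨ m = Multiplicative.ofAdd 1) m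
        with h | h
      · subst h; simp only [map_one]; exact one_mem _
      · subst h; exact Subgroup.subset_closure (Or.inl ⟨i, rfl⟩)
  | mul x y hx hy => rw [map_mul, map_mul]; exact mul_mem hx hy

end Helpers

section Main
open SemidirectProduct

variable {n : ℕ} {N : Subgroup (Equiv.Perm (Fin n))}

example (π : ↥N) (i : Fin n) : π • i = π.val i := rfl

lemma Tsq {G : Type*} [Group G] (ψ : Progenitor1 n N →* G) (i : Fin n) :
    ψ (inl (tFP1 i)) * ψ (inl (tFP1 i)) = 1 := by
  rw [← map_mul, ← map_mul, tFP1_sq, map_one, map_one]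

lemma eH {G : Type*} [Group G] (hperf : commutator ↥N = ⊤) (ψ : Progenitor1 n N →* G)
    (π : ↥N) : ψ (inr π) ∈ Subgroup.map (ψ.comp (inr : ↥N →* Progenitor1 n N)) ⁅(⊤ : Subgroup ↥N), ⊤⁆ :=
  ⟨π, by rw [← commutator_def, hperf]; exact Subgroup.mem_top π, rfl⟩

end Main

section Main2
open SemidirectProduct

variable {n : ℕ} {N : Subgroup (Equiv.Perm (Fin n))}

lemma progenitor_image_comm {G : Type*} [Group G] (hn : 2 ≤ n)
    (hperf : commutator ↥N = ⊤) (htrans : MulAction.IsPretransitive ↥N (Fin n))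
    (ψ : Progenitor1 n N →* G) (hψ : Function.Surjective ψ)
    (hcomm : ∀ a ∈ commutator G, ∀ b ∈ commutator G, a * b = b * a)
    (x y : G) : x * y = y * x := by
  haveI := htrans
  set T : Fin n → G := fun i => ψ (inl (tFP1 i)) with hTdef
  set e : ↥N → G := fun π => ψ (inr π) with hedef
  have hT2 : ∀ i, T i * T i = 1 := fun i => Tsq ψ i
  have hTinv : ∀ i, (T i)⁻¹ = T i := fun i => inv_eq_of_mul_eq_one_right (hT2 i)
  have hconj : ∀ (π : ↥N) (i : Fin n), e π * T i * (e π)⁻¹ = T (π.val i) :=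
    fun π i => conj_t' ψ π i
  have heH : ∀ π : ↥N, e π ∈ commutator G := by
    intro π
    have h1 := eH hperf ψ π
    rw [Subgroup.map_commutator] at h1
    exact Subgroup.commutator_mono le_top le_top h1
  have huH : ∀ i j : Fin n, T i * T j ∈ commutator G := by
    intro i j
    obtain ⟨π, hπ⟩ := MulAction.exists_smul_eq ↥N i j
    have hπ' : π.val i = j := hπ
    have key : T i * T j = ⁅T i, e π⁆ := by
      rw [commutatorElement_def, hTinv, ← hπ', ← hconj π i]
      simp [mul_assoc]
    rw [key]
    exact Subgroup.commutator_mem_commutator (Subgroup.mem_top _) (Subgroup.mem_top _)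
  have hinv : ∀ (π : ↥N) (i j : Fin n), T (π.val i) * T (π.val j) = T i * T j := by
    intro π i j
    have h1 : e π * (T i * T j) * (e π)⁻¹ = T (π.val i) * T (π.val j) := by
      rw [← hconj π i, ← hconj π j]; group
    rw [← h1, hcomm _ (heH π) _ (huH i j)]
    group
  have h0 : 0 < n := by omega
  set i0 : Fin n := ⟨0, h0⟩ with hi0
  have hw : ∀ π σ : ↥N, T i0 * T ((π * σ).val i0) = (T i0 * T (π.val i0)) * (T i0 * T (σ.val i0)) := by
    intro π σ
    have h1 : (π * σ).val i0 = π.val (σ.val i0) := rfl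
    rw [h1]
    calc T i0 * T (π.val (σ.val i0))
        = T i0 * (T (π.val i0) * (T (π.val i0) * T (π.val (σ.val i0)))) := by
          rw [← mul_assoc (T (π.val i0)), hT2, one_mul]
      _ = (T i0 * T (π.val i0)) * (T i0 * T (σ.val i0)) := by
          rw [hinv π i0 (σ.val i0), mul_assoc]
  set W : ↥N →* G := MonoidHom.mk' (fun π => T i0 * T (π.val i0)) hw with hWdef
  have hW1 : ∀ π : ↥N, T i0 * T (π.val i0) = 1 := by
    intro π
    have hker : commutator ↥N ≤ W.ker := by
      rw [commutator_def]
      refine Subgroup.commutator_le.mpr fun g1 _ g2 _ => ?_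
      rw [MonoidHom.mem_ker, map_commutatorElement]
      exact commutatorElement_eq_one_iff_mul_comm.mpr
        (hcomm _ (huH _ _) _ (huH _ _))
    exact MonoidHom.mem_ker.mp (hker (by rw [hperf]; exact Subgroup.mem_top π))
  have hTT : ∀ j, T j = T i0 := by
    intro j
    obtain ⟨π, hπ⟩ := MulAction.exists_smul_eq ↥N i0 j
    have h1 : T i0 * T j = 1 := by rw [← (show π.val i0 = j from hπ)]; exact hW1 π
    have h2 := inv_eq_of_mul_eq_one_right h1
    rw [← h2]; exact hTinv i0
  set S : Set G := (Set.range fun i => ψ (inl (tFP1 i))) ∪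
      (Set.range fun π : ↥N => ψ (inr π)) with hSdef
  have hTe : ∀ (σ : ↥N) (i : Fin n), e σ * T i = T i * e σ := by
    intro σ i
    have h4 := hconj σ i
    rw [hTT (σ.val i), ← hTT i] at h4
    calc e σ * T i = (e σ * T i * (e σ)⁻¹) * e σ := by group
      _ = T i * e σ := by rw [h4]
  have hSc : ∀ a ∈ S, ∀ b ∈ S, a * b = b * a := by
    rintro a (⟨i, rfl⟩ | ⟨π, rfl⟩) b (⟨j, rfl⟩ | ⟨σ, rfl⟩)
    · show T i * T j = T j * T i
      rw [hTT i, hTT j]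
    · exact (hTe σ i).symm
    · exact hTe π j
    · exact hcomm _ (heH π) _ (heH σ)
  have hcent : ∀ s ∈ S, Subgroup.closure S ≤ Subgroup.centralizer {s} := by
    intro s hs
    refine (Subgroup.closure_le _).mpr fun a ha => ?_
    refine Subgroup.mem_centralizer_iff.mpr fun h hh => ?_
    rw [Set.mem_singleton_iff] at hh; subst hh
    exact hSc _ hs _ ha
  have hcent2 : ∀ x ∈ Subgroup.closure S, ∀ y ∈ Subgroup.closure S, x * y = y * x := by
    intro x hx y hy
    have h1 : Subgroup.closure S ≤ Subgroup.centralizer {x} := by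
      refine (Subgroup.closure_le _).mpr fun a ha => ?_
      refine Subgroup.mem_centralizer_iff.mpr fun h hh => ?_
      rw [Set.mem_singleton_iff] at hh; subst hh
      exact (Subgroup.mem_centralizer_iff.mp ((hcent a ha) hx) a rfl).symm
    exact Subgroup.mem_centralizer_iff.mp (h1 hy) x rfl
  exact hcent2 x (mem_closure_aux ψ hψ x) y (mem_closure_aux ψ hψ y)

end Main2

section Main3
open SemidirectProduct

variable {n : ℕ} {N : Subgroup (Equiv.Perm (Fin n))}

lemma progenitor_abelianization (hn : 2 ≤ n)
    (hperf : commutator ↥N = ⊤) (htrans : MulAction.IsPretransitive ↥N (Fin n))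
    {A : Type*} [CommGroup A] (ψ : Progenitor1 n N →* A) (hψ : Function.Surjective ψ) :
    ∃ a : A, a * a = 1 ∧ ∀ x : A, x ∈ Subgroup.zpowers a := by
  haveI := htrans
  have h0 : 0 < n := by omega
  refine ⟨ψ (inl (tFP1 ⟨0, h0⟩)), Tsq ψ _, ?_⟩
  intro x
  have he : ∀ π : ↥N, ψ (inr π) = 1 := by
    intro π
    have h1 := eH hperf ψ π
    rw [Subgroup.map_commutator] at h1
    have h2 : ⁅Subgroup.map (ψ.comp (inr : ↥N →* Progenitor1 n N)) ⊤,
        Subgroup.map (ψ.comp (inr : ↥N →* Progenitor1 n N)) ⊤⁆ ≤ (⊥ : Subgroup A) :=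
      Subgroup.commutator_le.mpr fun g1 _ g2 _ =>
        Subgroup.mem_bot.mpr (commutatorElement_eq_one_iff_mul_comm.mpr (mul_comm g1 g2))
    exact Subgroup.mem_bot.mp (h2 h1)
  have hTt : ∀ i, ψ (inl (tFP1 i)) = ψ (inl (tFP1 ⟨0, h0⟩)) := by
    intro i
    obtain ⟨π, hπ⟩ := MulAction.exists_smul_eq ↥N (⟨0, h0⟩ : Fin n) i
    have h := conj_t' ψ π ⟨0, h0⟩
    rw [(show π.val ⟨0, h0⟩ = i from hπ), he π] at h
    simpa using h.symm
  have hle : Subgroup.closure ((Set.range fun i => ψ (inl (tFP1 i))) ∪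
      (Set.range fun π : ↥N => ψ (inr π))) ≤ Subgroup.zpowers (ψ (inl (tFP1 ⟨0, h0⟩))) := by
    refine (Subgroup.closure_le _).mpr ?_
    rintro a (⟨i, rfl⟩ | ⟨π, rfl⟩)
    · show ψ (inl (tFP1 i)) ∈ (Subgroup.zpowers (ψ (inl (tFP1 ⟨0, h0⟩))) : Set A)
      rw [hTt i]; exact Subgroup.mem_zpowers _
    · show ψ (inr π) ∈ (Subgroup.zpowers (ψ (inl (tFP1 ⟨0, h0⟩))) : Set A)
      rw [he π]; exact one_mem _
  exact hle (mem_closure_aux ψ hψ x)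

end Main3

theorem progenitor_image_has_perfect_subgroup_of_index_at_most_two' (n : ℕ) (hn : 2 ≤ n)
    (N : Subgroup (Equiv.Perm (Fin n)))
    (hperf : commutator ↥N = ⊤)
    (hprim : MulAction.IsPretransitive ↥N (Fin n))
    (G : Type*) [Group G] (φ : Progenitor1 n N →* G) (hφ : Function.Surjective φ) :
    ⁅commutator G, commutator G⁆ = commutator G ∧ (commutator G).index ∣ 2 := by
  have htrans := hprim
  constructor
  · set K := ⁅commutator G, commutator G⁆ with hK
    have hle : K ≤ commutator G := Subgroup.commutator_le.mpr fun g1 _ g2 _ =>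
      Subgroup.commutator_mem_commutator (Subgroup.mem_top _) (Subgroup.mem_top _)
    refine le_antisymm hle ?_
    haveI : K.Normal := Subgroup.commutator_normal _ _
    set q := QuotientGroup.mk' K with hq'
    have hq : Function.Surjective q := QuotientGroup.mk'_surjective K
    have hψs : Function.Surjective (q.comp φ) := hq.comp hφ
    have hcomm : ∀ a ∈ commutator (G ⧸ K), ∀ b ∈ commutator (G ⧸ K), a * b = b * a := by
      have hmap : commutator (G ⧸ K) = Subgroup.map q (commutator G) := by
        rw [commutator_def, commutator_def, Subgroup.map_commutator,
          Subgroup.map_top_of_surjective q hq]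
      rw [hmap]
      rintro a ⟨g1, hg1, rfl⟩ b ⟨g2, hg2, rfl⟩
      have h1 : ⁅q g1, q g2⁆ = 1 := by
        rw [← map_commutatorElement]
        rw [← MonoidHom.mem_ker, QuotientGroup.ker_mk']
        exact Subgroup.commutator_mem_commutator hg1 hg2
      exact commutatorElement_eq_one_iff_mul_comm.mp h1
    have habel := progenitor_image_comm hn hperf htrans (q.comp φ) hψs hcomm
    rw [commutator_def]
    refine Subgroup.commutator_le.mpr fun g1 _ g2 _ => ?_
    have h1 : q ⁅g1, g2⁆ = 1 := by
      rw [map_commutatorElement]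
      exact commutatorElement_eq_one_iff_mul_comm.mpr (habel (q g1) (q g2))
    rwa [← MonoidHom.mem_ker, QuotientGroup.ker_mk'] at h1
  · have hofs : Function.Surjective (Abelianization.of : G →* Abelianization G) :=
      fun x => QuotientGroup.induction_on x fun g => ⟨g, rfl⟩
    obtain ⟨a, ha2, hgen⟩ := progenitor_abelianization hn hperf htrans
      ((Abelianization.of : G →* Abelianization G).comp φ) (hofs.comp hφ)
    have htop : Subgroup.zpowers a = ⊤ := eq_top_iff.mpr fun x _ => hgen x
    have hcard : Nat.card (Abelianization G) = orderOf a := by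
      rw [← Nat.card_zpowers, htop, Subgroup.card_top]
    have hdvd : orderOf a ∣ 2 := orderOf_dvd_of_pow_eq_one (by rw [pow_two]; exact ha2)
    have hidx : (commutator G).index = Nat.card (Abelianization G) := rfl
    rw [hidx, hcard]; exact hdvd

/-- An action is preprimitive if it is (pre)transitive and every block is trivial,
i.e. it preserves no nontrivial partition. -/
def IsPreprimitive (G X : Type*) [Group G] [MulAction G X] : Prop :=
  MulAction.IsPretransitive G X ∧
    ∀ B : Set X, MulAction.IsBlock G B → MulAction.IsTrivialBlock B

/-- If `N ≤ Sym(Fin n)` (`n ≥ 2`) is perfect and acts primitively on `Fin n`,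
then every homomorphic image `G` of the progenitor `P = 2^{⋆n} : N` possesses a perfect
subgroup of index at most `2`: the commutator subgroup of `G` is perfect and has index
dividing `2` in `G`. -/
theorem progenitor_image_has_perfect_subgroup_of_index_at_most_two (n : ℕ) (hn : 2 ≤ n)
    (N : Subgroup (Equiv.Perm (Fin n)))
    (hperf : commutator ↥N = ⊤)
    (hprim : IsPreprimitive ↥N (Fin n))
    (G : Type*) [Group G] (φ : Progenitor1 n N →* G) (hφ : Function.Surjective φ) :
    ⁅commutator G, commutator G⁆ = commutator G ∧ (commutator G).index ∣ 2 := by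
  exact progenitor_image_has_perfect_subgroup_of_index_at_most_two' n hn N hperf hprim.1 G φ hφ
end
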